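/- For any subspace V of the vector space K⟨G⟩ spanned by a well-ordered set G, there exists a unique reduced basis of V, i.e. a basis B such that every element of B has leading coefficient 1, and for any two distinct elements e, e' of B, the leading term of e' does not appear in the support of e. -/

import Mathlib

open Finsupp

variable {K G : Type*} [Field K] [LinearOrder G] [WellFoundedLT G]

/-- `B` is a reduced basis of the subspace `V` of `K⟨G⟩`: it is a linearly independent
spanning set of `V`, every element has leading coefficient `1`, and the leading term of one
element never appears in the support of another. -/
def IsReducedBasis (V : Submodule K (G →₀ K)) (B : Set (G →₀ K)) : Prop :=
  LinearIndependent K ((↑) : B → G →₀ K) ∧ Submodule.span K B = V ∧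
    (∀ e ∈ B, ∀ m : G, e.support.max = (m : WithBot G) → e m = 1) ∧
    (∀ e ∈ B, ∀ e' ∈ B, e ≠ e' → ∀ m : G, e'.support.max = (m : WithBot G) → m ∉ e.support)

set_option linter.unusedSectionVars false

namespace ReducedBasisAux

/-- leading terms of nonzero elements of V -/
def L (V : Submodule K (G →₀ K)) : Set G :=
  {m | ∃ v ∈ V, v.support.max = (m : WithBot G)}

/-- canonical reduced generator with leading term m -/
def P (V : Submodule K (G →₀ K)) (m : G) (v : G →₀ K) : Prop :=
  v ∈ V ∧ v.support.max = (m : WithBot G) ∧ v m = 1 ∧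
    ∀ g ∈ L V, g ≠ m → v g = 0

variable {V : Submodule K (G →₀ K)}

lemma le_of_max_eq {v : G →₀ K} {m g : G} (h : v.support.max = (m : WithBot G))
    (hg : v g ≠ 0) : g ≤ m := by
  have := Finset.le_max (Finsupp.mem_support_iff.2 hg)
  rw [h] at this
  exact_mod_cast this

lemma max_eq_of {v : G →₀ K} {m : G} (hm : v m ≠ 0)
    (hle : ∀ g, v g ≠ 0 → g ≤ m) : v.support.max = (m : WithBot G) := by
  refine le_antisymm (Finset.max_le_iff.2 ?_) (Finset.le_max (Finsupp.mem_support_iff.2 hm))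
  intro g hg
  exact_mod_cast hle g (Finsupp.mem_support_iff.1 hg)

lemma apply_eq_zero_of_not_le {v : G →₀ K} {m : G}
    (h : ¬ (m : WithBot G) ≤ v.support.max) : v m = 0 := by
  by_contra hv
  exact h (Finset.le_max (Finsupp.mem_support_iff.2 hv))

lemma P_unique {m : G} {v v' : G →₀ K} (h : P V m v) (h' : P V m v') : v = v' := by
  obtain ⟨hv, hmax, hm1, hz⟩ := h
  obtain ⟨hv', hmax', hm1', hz'⟩ := h'
  by_contra hne
  set d := v - v' with hd
  have hd0 : d ≠ 0 := sub_ne_zero.2 hne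
  have hdV : d ∈ V := sub_mem hv hv'
  obtain ⟨g, hg⟩ : ∃ g : G, d.support.max = (g : WithBot G) := by
    rcases Finset.max_of_nonempty (Finsupp.support_nonempty_iff.2 hd0) with ⟨g, hg⟩
    exact ⟨g, hg⟩
  have hgL : g ∈ L V := ⟨d, hdV, hg⟩
  have hdg : d g ≠ 0 := Finsupp.mem_support_iff.1 (Finset.mem_of_max hg)
  have hgm : g ≠ m := by
    rintro rfl
    simp [hd, Finsupp.sub_apply, hm1, hm1'] at hdg
  exact hdg (by simp [hd, Finsupp.sub_apply, hz g hgL hgm, hz' g hgL hgm])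

lemma exists_P : ∀ m ∈ L V, ∃ v, P V m v := by
  intro m
  induction m using WellFoundedLT.induction with
  | _ m ih =>
    rintro ⟨w0, hw0V, hw0max⟩
    classical
    have hw0m : w0 m ≠ 0 := Finsupp.mem_support_iff.1 (Finset.mem_of_max hw0max)
    set w : G →₀ K := (w0 m)⁻¹ • w0 with hw
    have hwV : w ∈ V := V.smul_mem _ hw0V
    have hwm : w m = 1 := by simp [hw, inv_mul_cancel₀ hw0m]
    have hwle : ∀ g, w g ≠ 0 → g ≤ m := by
      intro g hg
      have : w0 g ≠ 0 := by
        intro h0; simp [hw, h0] at hg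
      exact le_of_max_eq hw0max this
    -- set of bad lower leading terms
    set S : Finset G := w.support.filter (fun g => g ∈ L V ∧ g ≠ m) with hS
    have hSlt : ∀ g ∈ S, g < m := by
      intro g hg
      rw [hS, Finset.mem_filter] at hg
      exact lt_of_le_of_ne (hwle g (Finsupp.mem_support_iff.1 hg.1)) hg.2.2
    have hSL : ∀ g ∈ S, g ∈ L V := by
      intro g hg
      rw [hS, Finset.mem_filter] at hg
      exact hg.2.1
    choose E hE using fun (g : S) => ih g.1 (hSlt g.1 g.2) (hSL g.1 g.2)
    set v : G →₀ K := w - ∑ g : S, (w g.1) • E g with hv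
    have hEle : ∀ (g : S) (g' : G), (E g) g' ≠ 0 → g' ≤ g.1 :=
      fun g g' h => le_of_max_eq (hE g).2.1 h
    have hEm : ∀ g : S, (E g) m = 0 := by
      intro g
      by_contra h
      exact absurd (hEle g m h) (not_le.2 (hSlt g.1 g.2))
    have happly : ∀ g' : G, v g' = w g' - ∑ g : S, (w g.1) * (E g) g' := by
      intro g'
      simp [hv, Finsupp.sub_apply, Finsupp.finset_sum_apply, Finsupp.smul_apply, smul_eq_mul]
    have hvm : v m = 1 := by
      rw [happly]
      simp [hwm, hEm]
    have hvV : v ∈ V := sub_mem hwV (sum_mem fun g _ => V.smul_mem _ (hE g).1)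
    have hvz : ∀ g' ∈ L V, g' ≠ m → v g' = 0 := by
      intro g' hg'L hg'm
      rw [happly]
      by_cases hg'S : g' ∈ S
      · rw [Finset.sum_eq_single (⟨g', hg'S⟩ : S)]
        · rw [(hE ⟨g', hg'S⟩).2.2.1, mul_one, sub_self]
        · intro g _ hgne
          have : g.1 ≠ g' := by
            intro h; exact hgne (Subtype.ext h)
          rw [(hE g).2.2.2 g' hg'L (Ne.symm this), mul_zero]
        · intro h; exact absurd (Finset.mem_univ _) h
      · have hwg' : w g' = 0 := by
          by_contra h
          exact hg'S (by rw [hS, Finset.mem_filter]; exact ⟨Finsupp.mem_support_iff.2 h, hg'L, hg'm⟩)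
        have : ∀ g : S, (E g) g' = 0 := by
          intro g
          refine (hE g).2.2.2 g' hg'L ?_
          rintro rfl
          exact hg'S g.2
        simp [hwg', this]
    have hvle : ∀ g, v g ≠ 0 → g ≤ m := by
      intro g hg
      rw [happly] at hg
      by_contra hgm
      push_neg at hgm
      have h1 : w g = 0 := by
        by_contra h; exact absurd (hwle g h) (not_le.2 hgm)
      have h2 : ∀ g' : S, (E g') g = 0 := by
        intro g'
        by_contra h
        exact absurd ((hEle g' g h).trans (hSlt g'.1 g'.2).le) (not_le.2 hgm)
      simp [h1, h2] at hg
    exact ⟨v, hvV, max_eq_of (by rw [hvm]; exact one_ne_zero) hvle, hvm, hvz⟩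


variable (V : Submodule K (G →₀ K))

noncomputable def eps : L V → (G →₀ K) :=
  fun m => Classical.choose (exists_P m.1 m.2)

lemma eps_spec (m : L V) : P V m.1 (eps V m) :=
  Classical.choose_spec (exists_P m.1 m.2)

lemma eps_apply (m m' : L V) : eps V m m'.1 = if m' = m then 1 else 0 := by
  obtain ⟨_, hmax, h1, hz⟩ := eps_spec V m
  split
  · next h => rw [h]; exact h1
  · next h => exact hz m'.1 m'.2 (fun he => h (Subtype.ext he))

lemma eps_li : LinearIndependent K (eps V) := by
  apply LinearIndependent.of_comp (Finsupp.lsubtypeDomain (M := K) (R := K) (L V))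
  have : (Finsupp.lsubtypeDomain (M := K) (R := K) (L V)) ∘ eps V
      = fun m : L V => Finsupp.single m 1 := by
    funext m
    ext m'
    rw [Function.comp_apply, Finsupp.lsubtypeDomain_apply, Finsupp.subtypeDomain_apply]
    rw [eps_apply]
    simp [Finsupp.single_apply, eq_comm]
  rw [this]
  have h2 := (Finsupp.basisSingleOne (R := K) (ι := L V)).linearIndependent
  rwa [Finsupp.coe_basisSingleOne] at h2


lemma eps_mem (m : L V) : eps V m ∈ V := (eps_spec V m).1

lemma eps_inj : Function.Injective (eps V) := by
  intro m m' h
  have h1 := (eps_spec V m).2.1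
  have h2 := (eps_spec V m').2.1
  rw [h, h2] at h1
  exact Subtype.ext (by exact_mod_cast h1.symm)

lemma span_eps : Submodule.span K (Set.range (eps V)) = V := by
  apply le_antisymm
  · rw [Submodule.span_le]; rintro _ ⟨m, rfl⟩; exact eps_mem V m
  · intro v hv
    have key : ∀ (b : WithBot G), ∀ v ∈ V, v.support.max = b →
        v ∈ Submodule.span K (Set.range (eps V)) := by
      intro b
      induction b using WellFoundedLT.induction with
      | _ b ih =>
        intro v hvV hmax
        rcases eq_or_ne v 0 with rfl | hv0
        · exact zero_mem _
        obtain ⟨m, hm⟩ : ∃ m : G, v.support.max = (m : WithBot G) := by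
          rcases Finset.max_of_nonempty (Finsupp.support_nonempty_iff.2 hv0) with ⟨g, hg⟩
          exact ⟨g, hg⟩
        have hmL : m ∈ L V := ⟨v, hvV, hm⟩
        set e : G →₀ K := eps V ⟨m, hmL⟩ with he
        set v' : G →₀ K := v - (v m) • e with hv'
        have hv'V : v' ∈ V := sub_mem hvV (V.smul_mem _ (eps_mem V _))
        have hv'm : v' m = 0 := by
          have h1 : e m = 1 := (eps_spec V ⟨m, hmL⟩).2.2.1
          simp [hv', h1]
        have hv'lt : v'.support.max < b := by
          rw [← hmax, hm]
          rcases eq_or_ne v' 0 with h0 | h0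
          · rw [h0]; simp
          obtain ⟨m', hm'⟩ := Finset.max_of_nonempty (Finsupp.support_nonempty_iff.2 h0)
          rw [hm']
          have hm'supp : v' m' ≠ 0 := Finsupp.mem_support_iff.1 (Finset.mem_of_max hm')
          have hle : m' ≤ m := by
            have h1 : v m' ≠ 0 ∨ e m' ≠ 0 := by
              by_contra h
              push_neg at h
              simp [hv', h.1, h.2] at hm'supp
            rcases h1 with h1 | h1
            · exact le_of_max_eq hm h1
            · exact le_of_max_eq (eps_spec V ⟨m, hmL⟩).2.1 h1
          exact_mod_cast lt_of_le_of_ne hle (fun h => hm'supp (h ▸ hv'm))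
        have hsp := ih _ hv'lt v' hv'V rfl
        have : v = v' + (v m) • e := by rw [hv']; abel
        rw [this]
        exact add_mem hsp (Submodule.smul_mem _ _ (Submodule.subset_span ⟨_, rfl⟩))
    exact key _ v hv rfl


section Uniq

variable {B' : Set (G →₀ K)}

lemma exists_lead
    (h1 : ∀ e ∈ B', ∀ m : G, e.support.max = (m : WithBot G) → e m = 1)
    (h4 : ∀ e ∈ B', ∀ e' ∈ B', e ≠ e' → ∀ m : G,
      e'.support.max = (m : WithBot G) → m ∉ e.support)
    {v : G →₀ K} (hv : v ∈ Submodule.span K B') {m : G}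
    (hmax : v.support.max = (m : WithBot G)) :
    ∃ b ∈ B', b.support.max = (m : WithBot G) := by
  classical
  obtain ⟨c, hcsub, hcsum⟩ := Submodule.mem_span_set.1 hv
  rw [Finsupp.sum] at hcsum
  have happ : ∀ g : G, v g = ∑ b ∈ c.support, c b * b g := by
    intro g; rw [← hcsum]; simp [Finsupp.finset_sum_apply]
  have hvm : v m ≠ 0 := Finsupp.mem_support_iff.1 (Finset.mem_of_max hmax)
  have hne : c.support.Nonempty := by
    rcases Finset.eq_empty_or_nonempty c.support with h | h
    · exfalso; apply hvm; rw [happ]; simp [h]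
    · exact h
  obtain ⟨b0, hb0mem, hb0⟩ := Finset.exists_mem_eq_sup c.support hne (fun b => b.support.max)
  have hb0B : b0 ∈ B' := hcsub hb0mem
  have hmle : (m : WithBot G) ≤ b0.support.max := by
    rw [← hb0]
    have hex : ∃ b ∈ c.support, b m ≠ 0 := by
      by_contra h
      push_neg at h
      apply hvm; rw [happ]
      exact Finset.sum_eq_zero (fun b hb => by rw [h b hb, mul_zero])
    obtain ⟨b, hb, hbm⟩ := hex
    exact le_trans (Finset.le_max (Finsupp.mem_support_iff.2 hbm)) (Finset.le_sup (f := fun b => b.support.max) hb)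
  obtain ⟨m', hm'⟩ : ∃ m' : G, b0.support.max = (m' : WithBot G) := by
    rcases hbot : b0.support.max with _ | m'
    · rw [hbot] at hmle; exact absurd hmle (not_le.2 (WithBot.bot_lt_coe m))
    · exact ⟨m', rfl⟩
  have hvm' : v m' = c b0 := by
    rw [happ, Finset.sum_eq_single b0]
    · rw [h1 b0 hb0B m' hm', mul_one]
    · intro b hb hbne
      have : m' ∉ b.support := h4 b (hcsub hb) b0 hb0B hbne m' hm'
      rw [Finsupp.notMem_support_iff.1 this, mul_zero]
    · intro h; exact absurd hb0mem h
  have hcb0 : c b0 ≠ 0 := Finsupp.mem_support_iff.1 hb0mem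
  have hle1 : m' ≤ m := le_of_max_eq hmax (by rw [hvm']; exact hcb0)
  have hle2 : m ≤ m' := by
    rw [hm'] at hmle; exact_mod_cast hmle
  have : m' = m := le_antisymm hle1 hle2
  exact ⟨b0, hb0B, by rw [hm', this]⟩

lemma mem_eq_eps {V : Submodule K (G →₀ K)}
    (h1 : ∀ e ∈ B', ∀ m : G, e.support.max = (m : WithBot G) → e m = 1)
    (h4 : ∀ e ∈ B', ∀ e' ∈ B', e ≠ e' → ∀ m : G,
      e'.support.max = (m : WithBot G) → m ∉ e.support)
    (hspan : Submodule.span K B' = V) {b : G →₀ K} (hb : b ∈ B')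
    {m : G} (hmax : b.support.max = (m : WithBot G)) :
    ∃ hm : m ∈ L V, b = eps V ⟨m, hm⟩ := by
  have hbV : b ∈ V := hspan ▸ Submodule.subset_span hb
  have hmL : m ∈ L V := ⟨b, hbV, hmax⟩
  refine ⟨hmL, ?_⟩
  refine P_unique (V := V) ⟨hbV, hmax, h1 b hb m hmax, ?_⟩ (eps_spec V ⟨m, hmL⟩)
  intro g hgL hgm
  obtain ⟨w, hwV, hwmax⟩ := hgL
  have hwspan : w ∈ Submodule.span K B' := by rw [hspan]; exact hwV
  obtain ⟨b', hb'B, hb'max⟩ := exists_lead h1 h4 hwspan hwmax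
  have hbb' : b ≠ b' := by
    rintro rfl
    rw [hmax] at hb'max
    exact hgm (by exact_mod_cast hb'max.symm)
  exact Finsupp.notMem_support_iff.1 (h4 b hb b' hb'B hbb' g hb'max)

end Uniq

end ReducedBasisAux

open ReducedBasisAux in
theorem unique_reduced_basis (V : Submodule K (G →₀ K)) :
    ∃! B : Set (G →₀ K), IsReducedBasis V B := by
  refine ⟨Set.range (eps V), ⟨(eps_li V).linearIndepOn_id, span_eps V, ?_, ?_⟩, ?_⟩
  · rintro _ ⟨m0, rfl⟩ m hmax
    have h := (eps_spec V m0).2.1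
    rw [hmax] at h
    have hm : m0.1 = m := by exact_mod_cast h.symm
    rw [← hm]
    exact (eps_spec V m0).2.2.1
  · rintro _ ⟨m0, rfl⟩ _ ⟨m1, rfl⟩ hne m hmax
    have h := (eps_spec V m1).2.1
    rw [hmax] at h
    have hm : m1.1 = m := by exact_mod_cast h.symm
    subst hm
    rw [Finsupp.notMem_support_iff]
    refine (eps_spec V m0).2.2.2 m1.1 m1.2 ?_
    intro he
    exact hne (by rw [Subtype.ext he])
  · rintro B' ⟨li', hspan', h1', h4'⟩
    ext b
    constructor
    · intro hb
      have hbne : b ≠ 0 := li'.ne_zero ⟨b, hb⟩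
      obtain ⟨m, hm⟩ := Finset.max_of_nonempty (Finsupp.support_nonempty_iff.2 hbne)
      obtain ⟨hmL, heq⟩ := mem_eq_eps h1' h4' hspan' hb hm
      exact ⟨⟨m, hmL⟩, heq.symm⟩
    · rintro ⟨m, rfl⟩
      obtain ⟨w, hwV, hwmax⟩ := m.2
      have hwspan : w ∈ Submodule.span K B' := by rw [hspan']; exact hwV
      obtain ⟨b, hbB, hbmax⟩ := exists_lead h1' h4' hwspan hwmax
      obtain ⟨hm, heq⟩ := mem_eq_eps h1' h4' hspan' hbB hbmax
      have : eps V m = b := by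
        rw [heq]
      rw [this]
      exact hbB
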